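/- Let K ≥ 1 and for each k ∈ [K] let W_k ∈ ℝ^{n_k × n_{k-1}}, b_k ∈ ℝ^{n_k}, and let f : ℝ → ℝ. Define block matrices A_k ∈ ℝ^{(N+1)×(N+1)} (with N = n_1 + ⋯ + n_K and one extra bias coordinate fixed to 1) such that A_k acts as identity on all coordinates except those of block k, where its rows are [0 ⋯ 0, W_k, 0 ⋯ 0, b_k] reading the input block k−1 and the bias coordinate. Then for every input x ∈ ℝ^{n_0}, the synchronous iteration h^{(k)} = f(A_k h^{(k-1)}) (with f applied only to updated coordinates, bias coordinate held at 1), started from h^{(0)} = (x, 0, …, 0, 1), yields after K steps output coordinates equal to the MLP output T_K ∘ f ∘ T_{K-1} ∘ ⋯ ∘ f ∘ T_1(x), where T_k(z) = W_k z + b_k. -/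

import Mathlib

/-- Nodes of the GNM graph simulating a `K`-layer MLP: one node per neuron of each layer
`0, …, K` (layer `0` is the input), plus one bias node. -/
abbrev MLPNode (K : ℕ) (n : ℕ → ℕ) : Type :=
  ((k : Fin (K + 1)) × Fin (n k)) ⊕ Unit

/-- The block matrix `A_k`: it acts as identity on all coordinates except those of block
`k+1`, whose rows read the previous block through `W k` and the bias coordinate through
`b k`; the bias row is `(0, …, 0, 1)`. -/
def mlpBlockMat (K : ℕ) (n : ℕ → ℕ)
    (W : (k : ℕ) → Matrix (Fin (n (k + 1))) (Fin (n k)) ℝ)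
    (b : (k : ℕ) → Fin (n (k + 1)) → ℝ) (k : ℕ) :
    Matrix (MLPNode K n) (MLPNode K n) ℝ :=
  fun i j =>
    match i, j with
    | Sum.inl ⟨l, a⟩, Sum.inl ⟨l', a'⟩ =>
        if hl : (l : ℕ) = k + 1 then
          if hl' : (l' : ℕ) = k then
            W k (Fin.cast (congrArg n hl) a) (Fin.cast (congrArg n hl') a')
          else 0
        else
          if (⟨l, a⟩ : (k : Fin (K + 1)) × Fin (n k)) = ⟨l', a'⟩ then 1 else 0
    | Sum.inl ⟨l, a⟩, Sum.inr _ =>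
        if hl : (l : ℕ) = k + 1 then b k (Fin.cast (congrArg n hl) a) else 0
    | Sum.inr _, Sum.inl _ => 0
    | Sum.inr _, Sum.inr _ => 1

/-- The synchronous iteration `h^{(k)} = f(A_k h^{(k-1)})`, started from
`h^{(0)} = (x, 0, …, 0, 1)`, with the activation `f` applied only to the coordinates
updated at step `k` (those of block `k`) — and, as in an MLP, not at the final step `K` —
and with the bias coordinate held at `1`. -/
def mlpGnmState (K : ℕ) (n : ℕ → ℕ)
    (W : (k : ℕ) → Matrix (Fin (n (k + 1))) (Fin (n k)) ℝ)
    (b : (k : ℕ) → Fin (n (k + 1)) → ℝ) (f : ℝ → ℝ) (x : Fin (n 0) → ℝ) :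
    ℕ → MLPNode K n → ℝ
  | 0 => fun i =>
      match i with
      | Sum.inl ⟨l, a⟩ =>
          if hl : (l : ℕ) = 0 then x (Fin.cast (congrArg n hl) a) else 0
      | Sum.inr _ => 1
  | k + 1 => fun i =>
      match i with
      | Sum.inr _ => 1
      | Sum.inl ⟨l, a⟩ =>
          let v := (mlpBlockMat K n W b k).mulVec
            (mlpGnmState K n W b f x k) (Sum.inl ⟨l, a⟩)
          if (l : ℕ) = k + 1 ∧ k + 1 < K then f v else v

/-- The `K`-layer MLP `T_K ∘ f ∘ T_{K-1} ∘ ⋯ ∘ f ∘ T_1`, `T_k(z) = W_k z + b_k`,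
computed layer by layer. -/
def mlpState (n : ℕ → ℕ)
    (W : (k : ℕ) → Matrix (Fin (n (k + 1))) (Fin (n k)) ℝ)
    (b : (k : ℕ) → Fin (n (k + 1)) → ℝ) (f : ℝ → ℝ) (x : Fin (n 0) → ℝ) :
    (k : ℕ) → Fin (n k) → ℝ
  | 0 => x
  | k + 1 => fun i =>
      (W k).mulVec
        (if k = 0 then mlpState n W b f x k else fun j => f (mlpState n W b f x k j)) i
        + b k i

lemma mlpGnmState_bias (K : ℕ) (n : ℕ → ℕ)
    (W : (k : ℕ) → Matrix (Fin (n (k + 1))) (Fin (n k)) ℝ)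
    (b : (k : ℕ) → Fin (n (k + 1)) → ℝ) (f : ℝ → ℝ) (x : Fin (n 0) → ℝ)
    (m : ℕ) (u : Unit) : mlpGnmState K n W b f x m (Sum.inr u) = 1 := by
  cases m <;> rfl

lemma mlpGnm_key (K : ℕ) (n : ℕ → ℕ)
    (W : (k : ℕ) → Matrix (Fin (n (k + 1))) (Fin (n k)) ℝ)
    (b : (k : ℕ) → Fin (n (k + 1)) → ℝ) (f : ℝ → ℝ) (x : Fin (n 0) → ℝ) :
    ∀ (m : ℕ), m ≤ K → ∀ (l : Fin (K + 1)) (hl : (l : ℕ) = m) (a : Fin (n l)),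
      mlpGnmState K n W b f x m (Sum.inl ⟨l, a⟩) =
        if 0 < m ∧ m < K then
          f (mlpState n W b f x m (Fin.cast (congrArg n hl) a))
        else mlpState n W b f x m (Fin.cast (congrArg n hl) a) := by
  intro m
  induction m with
  | zero =>
      intro _ l hl a
      simp only [mlpGnmState, dif_pos hl, lt_irrefl, false_and, if_false]
      rfl
  | succ m ih =>
      intro hm l hl a
      have hmK : m < K := by omega
      have hmle : m ≤ K := by omega
      set lm : Fin (K + 1) := ⟨m, by omega⟩ with hlm
      have hv : (mlpBlockMat K n W b m).mulVec
          (mlpGnmState K n W b f x m) (Sum.inl ⟨l, a⟩) =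
          mlpState n W b f x (m + 1) (Fin.cast (congrArg n hl) a) := by
        rw [Matrix.mulVec, dotProduct, Fintype.sum_sum_type]
        have hunit : ∑ u : Unit,
            mlpBlockMat K n W b m (Sum.inl ⟨l, a⟩) (Sum.inr u) *
              mlpGnmState K n W b f x m (Sum.inr u) =
            b m (Fin.cast (congrArg n hl) a) := by
          simp [mlpBlockMat, mlpGnmState_bias, dif_pos hl]
        rw [hunit, ← Finset.univ_sigma_univ, Finset.sum_sigma]
        rw [Finset.sum_eq_single lm ?h₀ (by simp)]
        · have hstep : ∑ a' : Fin (n lm),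
              mlpBlockMat K n W b m (Sum.inl ⟨l, a⟩) (Sum.inl ⟨lm, a'⟩) *
                mlpGnmState K n W b f x m (Sum.inl ⟨lm, a'⟩) =
              ∑ a' : Fin (n m),
                W m (Fin.cast (congrArg n hl) a) a' *
                  (if m = 0 then mlpState n W b f x m
                   else fun j => f (mlpState n W b f x m j)) a' := by
            refine Finset.sum_congr rfl fun a' _ => ?_
            rw [ih hmle lm rfl a']
            have hA : mlpBlockMat K n W b m (Sum.inl ⟨l, a⟩) (Sum.inl ⟨lm, a'⟩) =
                W m (Fin.cast (congrArg n hl) a) a' := by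
              simp [mlpBlockMat, dif_pos hl]
              intro h
              exact (h rfl).elim
            rw [hA]
            rcases Nat.eq_zero_or_pos m with h0 | h0
            · subst h0
              simp [Fin.cast]
            · have h1 : ¬ m = 0 := by omega
              simp [h1, h0, hmK, Fin.cast]
          rw [hstep]
          show _ = mlpState n W b f x (m + 1) (Fin.cast (congrArg n hl) a)
          simp [mlpState, Matrix.mulVec, dotProduct]
        · intro l' _ hne
          have : (l' : ℕ) ≠ m := fun h => hne (Fin.ext h)
          simp [mlpBlockMat, dif_pos hl, this]
      show (if (l : ℕ) = m + 1 ∧ m + 1 < K then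
          f ((mlpBlockMat K n W b m).mulVec (mlpGnmState K n W b f x m) (Sum.inl ⟨l, a⟩))
        else (mlpBlockMat K n W b m).mulVec (mlpGnmState K n W b f x m) (Sum.inl ⟨l, a⟩)) = _
      rw [hv]
      by_cases hK' : m + 1 < K
      · simp [hl, hK']
      · simp [hl, hK']

/-- Theorem 2 of the paper: the synchronous GNM iteration on the block
matrices `A_1, …, A_K`, started from `(x, 0, …, 0, 1)`, yields after `K` steps output
coordinates (block `K`) equal to the MLP output `T_K ∘ f ∘ ⋯ ∘ f ∘ T_1 (x)`. -/
theorem gnm_simulates_mlp (K : ℕ) (hK : 1 ≤ K) (n : ℕ → ℕ)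
    (W : (k : ℕ) → Matrix (Fin (n (k + 1))) (Fin (n k)) ℝ)
    (b : (k : ℕ) → Fin (n (k + 1)) → ℝ) (f : ℝ → ℝ) :
    ∀ (x : Fin (n 0) → ℝ) (j : Fin (n K)),
      mlpGnmState K n W b f x K (Sum.inl ⟨Fin.last K, j⟩) =
        mlpState n W b f x K j := by
  intro x j
  have := mlpGnm_key K n W b f x K le_rfl (Fin.last K) rfl j
  simp only [lt_irrefl, and_false, if_false] at this
  rw [this]
  rfl
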